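/- Let (u,v) ∈ 𝒩. Then for every t ≥ 0 and every w ∈ V⁻ with (t,w) ≠ (1,0), one has E₂(u, tv + w) < E₂(u, v); that is, v is the unique maximizer of E₂(u,·) on F_u(v). -/

import Mathlib

open scoped InnerProductSpace
open Filter Topology


section Aux
variable {W : Type*} [NormedAddCommGroup W] [InnerProductSpace ℝ W]
variable {V : Type*} [NormedAddCommGroup V] [InnerProductSpace ℝ V]
variable {N : Type*} [NormedAddCommGroup N] [InnerProductSpace ℝ N]

lemma fu_contOn (f : N → ℝ → ℝ)
    (hf_cont : ContinuousOn (fun q : N × ℝ => f q.1 q.2) (Set.univ ×ˢ Set.Ici (0:ℝ)))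
    (u : N) : ContinuousOn (f u) (Set.Ici (0:ℝ)) := by
  have h : ContinuousOn (fun s : ℝ => (fun q : N × ℝ => f q.1 q.2) (u, s)) (Set.Ici 0) :=
    hf_cont.comp (Continuous.continuousOn (by continuity))
      (fun s hs => ⟨Set.mem_univ _, hs⟩)
  exact h

lemma b_integral_rep (ι : V →L[ℝ] W) (b : N → V → ℝ) (f : N → ℝ → ℝ)
    (hb_C2 : ContDiff ℝ 2 (fun q : N × V => b q.1 q.2))
    (hb_zero : ∀ u : N, b u 0 = 0)
    (hf_cont : ContinuousOn (fun q : N × ℝ => f q.1 q.2) (Set.univ ×ˢ Set.Ici (0:ℝ)))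
    (hgrad : ∀ (u : N) (v h : V), fderiv ℝ (b u) v h = f u ‖ι v‖ * ⟪ι v, ι h⟫_ℝ)
    (u : N) (z : V) :
    b u z = ∫ σ in (0:ℝ)..‖ι z‖, f u σ * σ := by
  have hfu : ContinuousOn (f u) (Set.Ici (0:ℝ)) := fu_contOn f hf_cont u
  set ρ := ‖ι z‖ with hρdef
  have hρ0 : 0 ≤ ρ := norm_nonneg _
  have hbu : ContDiff ℝ 2 (b u) :=
    hb_C2.comp (ContDiff.prodMk (contDiff_const (c := u)) contDiff_id)
  have hbd : Differentiable ℝ (b u) := hbu.differentiable (by norm_num)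
  have hderiv : ∀ τ ∈ Set.uIcc (0:ℝ) 1,
      HasDerivAt (fun τ : ℝ => b u (τ • z)) (f u (τ * ρ) * (τ * ρ ^ 2)) τ := by
    intro τ hτ
    have hτ0 : 0 ≤ τ := by
      rw [Set.uIcc_of_le (by norm_num : (0:ℝ) ≤ 1)] at hτ
      exact hτ.1
    have h1 : HasDerivAt (fun τ : ℝ => τ • z) z τ := by
      simpa using (hasDerivAt_id τ).smul_const z
    have h2 := (hbd (τ • z)).hasFDerivAt.comp_hasDerivAt τ h1
    refine h2.congr_deriv ?_
    rw [hgrad u (τ • z) z, map_smul, norm_smul, Real.norm_eq_abs, abs_of_nonneg hτ0,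
      real_inner_smul_left, real_inner_self_eq_norm_sq]
  have hint : IntervalIntegrable (fun τ : ℝ => f u (τ * ρ) * (τ * ρ ^ 2))
      MeasureTheory.volume 0 1 := by
    apply ContinuousOn.intervalIntegrable
    apply ContinuousOn.mul
    · exact hfu.comp (continuous_mul_right ρ).continuousOn
        (fun τ hτ => by
          rw [Set.uIcc_of_le (by norm_num : (0:ℝ) ≤ 1)] at hτ
          exact mul_nonneg hτ.1 hρ0)
    · fun_prop
  have hFTC := intervalIntegral.integral_eq_sub_of_hasDerivAt hderiv hint
  simp only [one_smul, zero_smul, hb_zero, sub_zero] at hFTC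
  rw [← hFTC]
  rcases eq_or_lt_of_le hρ0 with h0 | h0
  · rw [← h0]
    simp
  · have hρne : ρ ≠ 0 := ne_of_gt h0
    have hfe : (fun τ : ℝ => f u (τ * ρ) * (τ * ρ ^ 2)) =
        fun τ : ℝ => (fun σ => f u σ * σ * ρ) (τ * ρ) := by
      funext τ
      simp only
      ring
    rw [hfe, intervalIntegral.integral_comp_mul_right (fun σ => f u σ * σ * ρ) hρne]
    rw [zero_mul, one_mul, intervalIntegral.integral_mul_const, smul_eq_mul]
    field_simp
end Aux

section Aux2
variable {N : Type*} [NormedAddCommGroup N] [InnerProductSpace ℝ N]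

lemma key_int (f : N → ℝ → ℝ)
    (hf_cont : ContinuousOn (fun q : N × ℝ => f q.1 q.2) (Set.univ ×ˢ Set.Ici (0:ℝ)))
    (hf_mono : ∀ u : N, StrictMonoOn (f u) (Set.Ici (0:ℝ)))
    (u : N) {r s : ℝ} (hr : 0 < r) (hs : 0 ≤ s) (hne : s ≠ r) :
    f u r * (s ^ 2 - r ^ 2) / 2 <
      (∫ σ in (0:ℝ)..s, f u σ * σ) - ∫ σ in (0:ℝ)..r, f u σ * σ := by
  have hfu := fu_contOn f hf_cont u
  have hsubset : ∀ x y : ℝ, 0 ≤ x → 0 ≤ y → Set.uIcc x y ⊆ Set.Ici (0:ℝ) := by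
    intro x y hx hy σ hσ
    rcases Set.mem_uIcc.mp hσ with h | h
    · exact le_trans hx h.1
    · exact le_trans hy h.1
  have hInt : ∀ x y : ℝ, 0 ≤ x → 0 ≤ y →
      IntervalIntegrable (fun σ => f u σ * σ) MeasureTheory.volume x y := by
    intro x y hx hy
    exact ((hfu.mono (hsubset x y hx hy)).mul continuousOn_id).intervalIntegrable
  have hIntg : ∀ x y : ℝ, 0 ≤ x → 0 ≤ y →
      IntervalIntegrable (fun σ => (f u σ - f u r) * σ) MeasureTheory.volume x y := by
    intro x y hx hy
    exact (((hfu.mono (hsubset x y hx hy)).sub continuousOn_const).mul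
      continuousOn_id).intervalIntegrable
  have hIntc : ∀ x y : ℝ,
      IntervalIntegrable (fun σ => f u r * σ) MeasureTheory.volume x y := by
    intro x y
    exact (continuous_const.mul continuous_id).intervalIntegrable x y
  rw [intervalIntegral.integral_interval_sub_left (hInt 0 s le_rfl hs)
    (hInt 0 r le_rfl hr.le)]
  have hconst : (∫ σ in r..s, f u r * σ) = f u r * (s ^ 2 - r ^ 2) / 2 := by
    rw [intervalIntegral.integral_const_mul, integral_id]
    ring
  have hsub : (∫ σ in r..s, f u σ * σ) - (∫ σ in r..s, f u r * σ) =
      ∫ σ in r..s, (f u σ - f u r) * σ := by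
    rw [← intervalIntegral.integral_sub (hInt r s hr.le hs) (hIntc r s)]
    congr 1
    funext σ
    ring
  have hpos : 0 < ∫ σ in r..s, (f u σ - f u r) * σ := by
    rcases lt_or_gt_of_ne hne with hlt | hgt
    · -- s < r
      have heq : (∫ σ in r..s, (f u σ - f u r) * σ) =
          ∫ σ in s..r, (f u r - f u σ) * σ := by
        rw [intervalIntegral.integral_symm, ← intervalIntegral.integral_neg]
        congr 1
        funext σ
        ring
      rw [heq]
      apply intervalIntegral.intervalIntegral_pos_of_pos_on
      · exact (((continuousOn_const.sub (hfu.mono (hsubset s r hs hr.le))).mul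
          continuousOn_id)).intervalIntegrable
      · intro σ hσ
        have hσ0 : 0 < σ := lt_of_le_of_lt hs hσ.1
        have hmono := hf_mono u (Set.mem_Ici.mpr hσ0.le) (Set.mem_Ici.mpr hr.le) hσ.2
        exact mul_pos (by linarith) hσ0
      · exact hlt
    · -- r < s
      apply intervalIntegral.intervalIntegral_pos_of_pos_on
      · exact hIntg r s hr.le hs
      · intro σ hσ
        have hσ0 : 0 < σ := lt_trans hr hσ.1
        have hmono := hf_mono u (Set.mem_Ici.mpr hr.le) (Set.mem_Ici.mpr hσ0.le) hσ.1
        exact mul_pos (by linarith) hσ0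
      · exact hgt
  linarith [hsub, hconst, hpos]
end Aux2

theorem stmt_7
    {W : Type*} [NormedAddCommGroup W] [InnerProductSpace ℝ W] [CompleteSpace W]
    {V : Type*} [NormedAddCommGroup V] [InnerProductSpace ℝ V] [CompleteSpace V]
    (ι : V →L[ℝ] W) (hι : Function.Injective ι)
    (c : ℝ) (hc : 0 < c) (hιc : ∀ v : V, ‖ι v‖ ≤ c * ‖v‖)
    (Pp Pm : V →L[ℝ] V)
    (hP_sum : ∀ v : V, Pp v + Pm v = v)
    (hPp_idem : ∀ v : V, Pp (Pp v) = Pp v)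
    (hPm_idem : ∀ v : V, Pm (Pm v) = Pm v)
    (hP_orth : ∀ v w : V, ⟪Pp v, Pm w⟫_ℝ = 0)
    (a : V →L[ℝ] V →L[ℝ] ℝ)
    (ha : ∀ v w : V, a v w = ⟪Pp v, Pp w⟫_ℝ - ⟪Pm v, Pm w⟫_ℝ)
    {N : Type*} [NormedAddCommGroup N] [InnerProductSpace ℝ N] [CompleteSpace N]
    (p : ℝ) (hp : 1 < p)
    (b : N → V → ℝ) (f : N → ℝ → ℝ)
    (hb_C2 : ContDiff ℝ 2 (fun q : N × V => b q.1 q.2))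
    (hb_zero : ∀ u : N, b u 0 = 0)
    (hb_nonneg : ∀ (u : N) (v : V), 0 ≤ b u v)
    (hf_cont : ContinuousOn (fun q : N × ℝ => f q.1 q.2) (Set.univ ×ˢ Set.Ici (0:ℝ)))
    (hf_zero : ∀ u : N, f u 0 = 0)
    (hf_mono : ∀ u : N, StrictMonoOn (f u) (Set.Ici (0:ℝ)))
    (hf_nonneg : ∀ (u : N) (t : ℝ), 0 ≤ t → 0 ≤ f u t)
    (hgrad : ∀ (u : N) (v h : V), fderiv ℝ (b u) v h = f u ‖ι v‖ * ⟪ι v, ι h⟫_ℝ)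
    (u : N) (v : V)
    (hv_plus : Pp v ≠ 0)
    (hN1 : a v v = f u ‖ι v‖ * ⟪ι v, ι v⟫_ℝ)
    (hN2 : ∀ φ : V, Pm φ = φ → a v φ = f u ‖ι v‖ * ⟪ι v, ι φ⟫_ℝ) :
    ∀ (t : ℝ) (w : V), 0 ≤ t → Pm w = w → ¬(t = 1 ∧ w = 0) →
      (1/2 : ℝ) * a (t • v + w) (t • v + w) - b u (t • v + w) <
        (1/2 : ℝ) * a v v - b u v := by
  intro t w ht hw hne
  set r := ‖ι v‖ with hrdef
  set z := t • v + w with hzdef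
  set s := ‖ι z‖ with hsdef
  -- basic positivity facts
  have hv0 : v ≠ 0 := by
    intro h
    exact hv_plus (by simp [h])
  have hιv : ι v ≠ 0 := by
    intro h
    exact hv0 (hι (by simpa using h))
  have hr : 0 < r := norm_pos_iff.mpr hιv
  have hs0 : 0 ≤ s := norm_nonneg _
  have hfr : 0 < f u r := by
    have := hf_mono u (Set.mem_Ici.mpr le_rfl) (Set.mem_Ici.mpr hr.le) hr
    rwa [hf_zero] at this
  -- projections of w
  have hPpw : Pp w = 0 := by
    have h := hP_sum w
    rw [hw, add_eq_right] at h
    exact h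
  -- values of the quadratic form
  have haww : a w w = -(‖w‖ ^ 2) := by
    rw [ha w w, hPpw, hw]
    simp [real_inner_self_eq_norm_sq]
  have havw : a v w = f u r * ⟪ι v, ι w⟫_ℝ := hN2 w hw
  have hawv : a w v = a v w := by
    rw [ha w v, ha v w, real_inner_comm (Pp w), real_inner_comm (Pm w)]
  have havv : a v v = f u r * r ^ 2 := by
    rw [hN1, real_inner_self_eq_norm_sq]
  -- bilinear expansion
  have he1 : a z z = t * t * a v v + t * a v w + (t * a w v + a w w) := by
    rw [hzdef]
    simp only [map_add, map_smul, ContinuousLinearMap.add_apply,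
      ContinuousLinearMap.coe_smul', Pi.smul_apply, smul_eq_mul]
    ring
  -- inner product identity and Cauchy-Schwarz
  have hinner : ⟪ι v, ι z⟫_ℝ = t * r ^ 2 + ⟪ι v, ι w⟫_ℝ := by
    rw [hzdef]
    rw [map_add, map_smul, inner_add_right, inner_smul_right, real_inner_self_eq_norm_sq]
  have hCS : ⟪ι v, ι z⟫_ℝ ≤ r * s := real_inner_le_norm (ι v) (ι z)
  have hCS' : f u r * t * (t * r ^ 2 + ⟪ι v, ι w⟫_ℝ) ≤ f u r * t * (r * s) := by
    rw [← hinner]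
    exact mul_le_mul_of_nonneg_left hCS (mul_nonneg hfr.le ht)
  -- integral representation of b
  have hbv : b u v = ∫ σ in (0:ℝ)..r, f u σ * σ :=
    b_integral_rep ι b f hb_C2 hb_zero hf_cont hgrad u v
  have hbz : b u z = ∫ σ in (0:ℝ)..s, f u σ * σ :=
    b_integral_rep ι b f hb_C2 hb_zero hf_cont hgrad u z
  rw [he1, havv, havw, hawv, havw, haww, hbz, hbv]
  rcases eq_or_ne s r with hsr | hsr
  · -- equal norms case
    rw [hsr] at hCS' ⊢
    have hdisj : 0 < (t - 1) ^ 2 ∨ 0 < ‖w‖ ^ 2 := by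
      rcases not_and_or.mp hne with h | h
      · left
        have : t - 1 ≠ 0 := sub_ne_zero.mpr h
        positivity
      · right
        exact pow_pos (norm_pos_iff.mpr h) 2
    have hfr2 : 0 < f u r * r ^ 2 := by positivity
    rcases hdisj with h | h
    · linarith [hCS', mul_pos hfr2 h, sq_nonneg ‖w‖]
    · linarith [hCS', mul_nonneg hfr2.le (sq_nonneg (t - 1)), h]
  · -- distinct norms case
    have hKey := key_int f hf_cont hf_mono u hr hs0 hsr
    linarith [hCS', hKey, mul_nonneg hfr.le (sq_nonneg (s - t * r)),
      sq_nonneg ‖w‖]
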